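/- Let ρ̄(x) = (R² − |x|²)_+ on ℝ² with R > 1, and let B be the unit ball with V(B) := ∫_B ρ̄. Then there exists c > 0 such that for every measurable set E ⊂ ℝ² with ∫_E ρ̄ = ∫_B ρ̄, one has ∫_{E^c} ρ̄² − ∫_{B^c} ρ̄² ≥ c (∫_{E Δ B} ρ̄)². -/

import Mathlib

open Real Set Metric MeasureTheory

private lemma vol_cb (r : ℝ) (hr : 0 ≤ r) :
    volume (closedBall (0 : EuclideanSpace ℝ (Fin 2)) r) = ENNReal.ofReal (π * r ^ 2) := by
  rw [EuclideanSpace.volume_closedBall,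
    show ((Fintype.card (Fin 2) : ℝ) / 2 + 1) = 2 by simp; norm_num, Real.Gamma_two,
    Fintype.card_fin, ← ENNReal.ofReal_pow hr, ← ENNReal.ofReal_mul (by positivity)]
  congr 1
  rw [Real.sq_sqrt pi_nonneg]
  ring

private lemma vol_b (r : ℝ) (hr : 0 ≤ r) :
    volume (ball (0 : EuclideanSpace ℝ (Fin 2)) r) = ENNReal.ofReal (π * r ^ 2) := by
  rw [← vol_cb r hr]
  exact (MeasureTheory.Measure.addHaar_closedBall_eq_addHaar_ball
    (μ := (volume : Measure (EuclideanSpace ℝ (Fin 2)))) 0 r).symm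

private lemma vol_annulus (t : ℝ) (ht : 0 < t) :
    volume {x : EuclideanSpace ℝ (Fin 2) | |1 - ‖x‖ ^ 2| ≤ t} ≤ ENNReal.ofReal (2 * π * t) := by
  have hπ := Real.pi_pos
  have hup : {x : EuclideanSpace ℝ (Fin 2) | |1 - ‖x‖ ^ 2| ≤ t} ⊆
      closedBall 0 (Real.sqrt (1 + t)) := by
    intro x hx
    simp only [mem_setOf_eq] at hx
    have habs := abs_le.1 hx
    simp only [mem_closedBall, dist_zero_right]
    calc ‖x‖ = Real.sqrt (‖x‖ ^ 2) := (Real.sqrt_sq (norm_nonneg x)).symm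
      _ ≤ Real.sqrt (1 + t) := Real.sqrt_le_sqrt (by linarith)
  rcases lt_or_ge t 1 with h1 | h1
  · have hsub : {x : EuclideanSpace ℝ (Fin 2) | |1 - ‖x‖ ^ 2| ≤ t} ⊆
        closedBall 0 (Real.sqrt (1 + t)) \ ball 0 (Real.sqrt (1 - t)) := by
      intro x hx
      refine ⟨hup hx, ?_⟩
      simp only [mem_setOf_eq] at hx
      have habs := abs_le.1 hx
      simp only [mem_ball, dist_zero_right, not_lt]
      calc Real.sqrt (1 - t) ≤ Real.sqrt (‖x‖ ^ 2) := Real.sqrt_le_sqrt (by linarith)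
        _ = ‖x‖ := Real.sqrt_sq (norm_nonneg x)
    refine le_trans (measure_mono hsub) ?_
    rw [measure_diff
        ((ball_subset_closedBall).trans
          (closedBall_subset_closedBall (Real.sqrt_le_sqrt (by linarith))))
        measurableSet_ball.nullMeasurableSet
        (by rw [vol_b _ (Real.sqrt_nonneg _)]; exact ENNReal.ofReal_ne_top),
      vol_cb _ (Real.sqrt_nonneg _), vol_b _ (Real.sqrt_nonneg _),
      Real.sq_sqrt (by linarith), Real.sq_sqrt (by linarith),
      ← ENNReal.ofReal_sub _ (by nlinarith)]
    exact ENNReal.ofReal_le_ofReal (by nlinarith)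
  · refine le_trans (measure_mono hup) ?_
    rw [vol_cb _ (Real.sqrt_nonneg _), Real.sq_sqrt (by linarith)]
    exact ENNReal.ofReal_le_ofReal (by nlinarith)

/-- Quantitative stability of the centered unit ball for the weighted volume term
`∫_{Eᶜ} ρ̄²`, with weight `ρ̄(x) = (R² − |x|²)₊`: for every measurable set `E` of the same
`ρ̄`-mass as the unit ball `B`, the deficit controls the square of the `ρ̄`-mass of the
symmetric difference `E Δ B`. -/
theorem volume_term_stability
    (R : ℝ) (hR : 1 < R)
    (ρ : EuclideanSpace ℝ (Fin 2) → ℝ)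
    (hρ : ∀ x, ρ x = max (R ^ 2 - ‖x‖ ^ 2) 0) :
    ∃ c : ℝ, 0 < c ∧
      ∀ E : Set (EuclideanSpace ℝ (Fin 2)), MeasurableSet E →
        (∫ x in E, ρ x) = (∫ x in ball (0 : EuclideanSpace ℝ (Fin 2)) 1, ρ x) →
        (∫ x in Eᶜ, (ρ x) ^ 2) - (∫ x in (ball (0 : EuclideanSpace ℝ (Fin 2)) 1)ᶜ, (ρ x) ^ 2)
          ≥ c * (∫ x in symmDiff E (ball (0 : EuclideanSpace ℝ (Fin 2)) 1), ρ x) ^ 2 := by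
  have hπ := Real.pi_pos
  have hR0 : (0 : ℝ) < R := lt_trans one_pos hR
  set B : Set (EuclideanSpace ℝ (Fin 2)) := ball 0 1 with hB
  have hBm : MeasurableSet B := measurableSet_ball
  have hρc : Continuous ρ := by
    have h : ρ = fun x => max (R ^ 2 - ‖x‖ ^ 2) 0 := funext hρ
    rw [h]; fun_prop
  have hρnn : ∀ x, 0 ≤ ρ x := fun x => by rw [hρ x]; exact le_max_right _ _
  have hρle : ∀ x, ρ x ≤ R ^ 2 := by
    intro x; rw [hρ x]
    exact max_le (by nlinarith [sq_nonneg ‖x‖]) (by positivity)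
  have hzero : ∀ x : EuclideanSpace ℝ (Fin 2), x ∉ closedBall (0 : EuclideanSpace ℝ (Fin 2)) R →
      ρ x = 0 := by
    intro x hx
    simp only [mem_closedBall, dist_zero_right, not_le] at hx
    rw [hρ x, max_eq_right]
    nlinarith [norm_nonneg x]
  have hρsupp : HasCompactSupport ρ :=
    HasCompactSupport.intro (isCompact_closedBall _ _) hzero
  have hρint : Integrable ρ := hρc.integrable_of_hasCompactSupport hρsupp
  set g : EuclideanSpace ℝ (Fin 2) → ℝ := fun x => ρ x * |1 - ‖x‖ ^ 2| with hg
  have hgc : Continuous g := by rw [hg]; fun_prop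
  have hgnn : ∀ x, 0 ≤ g x := fun x => mul_nonneg (hρnn x) (abs_nonneg _)
  have hgsupp : HasCompactSupport g :=
    HasCompactSupport.intro (isCompact_closedBall (0 : EuclideanSpace ℝ (Fin 2)) R)
      (fun x hx => by rw [hg]; simp only; rw [hzero x hx, zero_mul])
  have hgint : Integrable g := hgc.integrable_of_hasCompactSupport hgsupp
  have hsqint : Integrable (fun x => ρ x ^ 2) :=
    (hρc.pow 2).integrable_of_hasCompactSupport
      (HasCompactSupport.intro (isCompact_closedBall (0 : EuclideanSpace ℝ (Fin 2)) R)
        (fun x hx => by rw [Pi.pow_apply, hzero x hx]; ring))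
  refine ⟨1 / (8 * π * R ^ 2), by positivity, ?_⟩
  intro E hE hmass
  set S : Set (EuclideanSpace ℝ (Fin 2)) := symmDiff E B with hS
  have hSdef : S = (E \ B) ∪ (B \ E) := by rw [hS, Set.symmDiff_def]
  have hEBm : MeasurableSet (E \ B) := hE.diff hBm
  have hBEm : MeasurableSet (B \ E) := hBm.diff hE
  have hSm : MeasurableSet S := by rw [hSdef]; exact hEBm.union hBEm
  have hdisj : Disjoint (E \ B) (B \ E) := disjoint_sdiff_sdiff
  set M : ℝ := ∫ x in S, ρ x with hM
  have hmass2 : (∫ x in E \ B, ρ x) = ∫ x in B \ E, ρ x := by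
    have h1 : (∫ x in E ∩ B, ρ x) + (∫ x in E \ B, ρ x) = ∫ x in E, ρ x :=
      integral_inter_add_diff hBm hρint.integrableOn
    have h2 : (∫ x in B ∩ E, ρ x) + (∫ x in B \ E, ρ x) = ∫ x in B, ρ x :=
      integral_inter_add_diff hE hρint.integrableOn
    rw [inter_comm] at h2
    linarith [hmass]
  have hMsplit : M = (∫ x in E \ B, ρ x) + (∫ x in B \ E, ρ x) := by
    rw [hM, hSdef]
    exact setIntegral_union hdisj hBEm hρint.integrableOn hρint.integrableOn
  have hkey : ∀ x, ρ x ^ 2 = (R ^ 2 - 1) * ρ x + ρ x * (1 - ‖x‖ ^ 2) := by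
    intro x
    rcases le_or_gt 0 (R ^ 2 - ‖x‖ ^ 2) with h | h
    · rw [hρ x, max_eq_left h]; ring
    · rw [hρ x, max_eq_right h.le]; ring
  have hBE : ∀ x ∈ B \ E, ρ x ^ 2 = (R ^ 2 - 1) * ρ x + g x := by
    intro x hx
    have hx1 : ‖x‖ < 1 := by
      have := hx.1; rw [hB] at this; simpa [mem_ball, dist_zero_right] using this
    have habs : |1 - ‖x‖ ^ 2| = 1 - ‖x‖ ^ 2 := abs_of_nonneg (by nlinarith [norm_nonneg x])
    rw [hg]; simp only; rw [habs]; exact hkey x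
  have hEB : ∀ x ∈ E \ B, ρ x ^ 2 = (R ^ 2 - 1) * ρ x - g x := by
    intro x hx
    have hx1 : 1 ≤ ‖x‖ := by
      have := hx.2; rw [hB] at this; simpa [mem_ball, dist_zero_right, not_lt] using this
    have habs : |1 - ‖x‖ ^ 2| = -(1 - ‖x‖ ^ 2) := abs_of_nonpos (by nlinarith)
    rw [hg]; simp only; rw [habs, hkey x]; ring
  have hI1 : (∫ x in B \ E, ρ x ^ 2)
      = (R ^ 2 - 1) * (∫ x in B \ E, ρ x) + (∫ x in B \ E, g x) := by
    rw [setIntegral_congr_fun hBEm hBE,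
      integral_add ((hρint.const_mul _).integrableOn) hgint.integrableOn, integral_const_mul]
  have hI2 : (∫ x in E \ B, ρ x ^ 2)
      = (R ^ 2 - 1) * (∫ x in B \ E, ρ x) - (∫ x in E \ B, g x) := by
    rw [setIntegral_congr_fun hEBm hEB,
      integral_sub ((hρint.const_mul _).integrableOn) hgint.integrableOn, integral_const_mul,
      hmass2]
  have hSg : (∫ x in S, g x) = (∫ x in E \ B, g x) + (∫ x in B \ E, g x) := by
    rw [hSdef]
    exact setIntegral_union hdisj hBEm hgint.integrableOn hgint.integrableOn
  have hdef : (∫ x in Eᶜ, ρ x ^ 2) - (∫ x in Bᶜ, ρ x ^ 2) = ∫ x in S, g x := by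
    have hcE : (∫ x in E, ρ x ^ 2) + (∫ x in Eᶜ, ρ x ^ 2) = ∫ x, ρ x ^ 2 :=
      integral_add_compl hE hsqint
    have hcB : (∫ x in B, ρ x ^ 2) + (∫ x in Bᶜ, ρ x ^ 2) = ∫ x, ρ x ^ 2 :=
      integral_add_compl hBm hsqint
    have hsE : (∫ x in E ∩ B, ρ x ^ 2) + (∫ x in E \ B, ρ x ^ 2) = ∫ x in E, ρ x ^ 2 :=
      integral_inter_add_diff hBm hsqint.integrableOn
    have hsB : (∫ x in B ∩ E, ρ x ^ 2) + (∫ x in B \ E, ρ x ^ 2) = ∫ x in B, ρ x ^ 2 :=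
      integral_inter_add_diff hE hsqint.integrableOn
    rw [inter_comm] at hsB
    rw [hSg]
    linarith
  rw [ge_iff_le, hdef]
  have hMnn : 0 ≤ M := setIntegral_nonneg hSm (fun x _ => hρnn x)
  rcases eq_or_lt_of_le hMnn with hM0 | hM0
  · rw [← hM0]
    simpa using setIntegral_nonneg hSm (fun x _ => hgnn x)
  · set t : ℝ := M / (4 * π * R ^ 2) with ht
    have ht0 : 0 < t := by rw [ht]; positivity
    set A : Set (EuclideanSpace ℝ (Fin 2)) := {x | |1 - ‖x‖ ^ 2| ≤ t} with hA
    have hwc : Continuous fun x : EuclideanSpace ℝ (Fin 2) => |1 - ‖x‖ ^ 2| := by fun_prop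
    have hAm : MeasurableSet A := measurableSet_le hwc.measurable measurable_const
    have hAvol : volume A ≤ ENNReal.ofReal (2 * π * t) := vol_annulus t ht0
    have hAfin : volume A < ⊤ := lt_of_le_of_lt hAvol ENNReal.ofReal_lt_top
    have hAmass : (∫ x in A, ρ x) ≤ 2 * π * R ^ 2 * t := by
      calc (∫ x in A, ρ x) ≤ ∫ _x in A, R ^ 2 :=
            setIntegral_mono_on hρint.integrableOn
              (integrableOn_const hAfin.ne) hAm (fun x _ => hρle x)
        _ = (volume A).toReal * R ^ 2 := by rw [setIntegral_const, smul_eq_mul]; rfl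
        _ ≤ (2 * π * t) * R ^ 2 := by
            have h := ENNReal.toReal_le_of_le_ofReal (by positivity) hAvol
            nlinarith
        _ = 2 * π * R ^ 2 * t := by ring
    set T : Set (EuclideanSpace ℝ (Fin 2)) := {x | t < |1 - ‖x‖ ^ 2|} with hT
    have hTm : MeasurableSet T := measurableSet_lt measurable_const hwc.measurable
    have h3 : (∫ x in S \ T, ρ x) ≤ ∫ x in A, ρ x := by
      refine setIntegral_mono_set hρint.integrableOn (ae_of_all _ hρnn)
        (HasSubset.Subset.eventuallyLE ?_)
      intro x hx
      have hxn : ¬ t < |1 - ‖x‖ ^ 2| := hx.2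
      exact not_lt.mp hxn
    have hsplitT : (∫ x in S ∩ T, ρ x) + (∫ x in S \ T, ρ x) = ∫ x in S, ρ x :=
      integral_inter_add_diff hTm hρint.integrableOn
    have h4 : M / 2 ≤ ∫ x in S ∩ T, ρ x := by
      have hAt : 2 * π * R ^ 2 * t = M / 2 := by
        rw [ht]; field_simp; ring
      linarith
    have h5 : (∫ x in S ∩ T, t * ρ x) ≤ ∫ x in S ∩ T, g x := by
      refine setIntegral_mono_on ((hρint.const_mul t).integrableOn) hgint.integrableOn
        (hSm.inter hTm) ?_
      intro x hx
      have hxT : t < |1 - ‖x‖ ^ 2| := hx.2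
      rw [hg]; simp only
      nlinarith [hρnn x]
    have h6 : (∫ x in S ∩ T, g x) ≤ ∫ x in S, g x :=
      setIntegral_mono_set hgint.integrableOn (ae_of_all _ hgnn)
        (HasSubset.Subset.eventuallyLE inter_subset_left)
    have h7 : t * (M / 2) ≤ ∫ x in S, g x := by
      calc t * (M / 2) ≤ t * ∫ x in S ∩ T, ρ x := mul_le_mul_of_nonneg_left h4 ht0.le
        _ = ∫ x in S ∩ T, t * ρ x := (integral_const_mul _ _).symm
        _ ≤ ∫ x in S, g x := le_trans h5 h6
    have hfin : 1 / (8 * π * R ^ 2) * M ^ 2 = t * (M / 2) := by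
      rw [ht]; field_simp; ring
    linarith
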